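/- Let λ be a Mealy QHMM whose sub-TOM entries are all trace-monotonicity preserving quantum operations. Fix an emission sequence O = (o_1,...,o_T). For a state sequence w = (n_0,...,n_k) ending at state S_i, define B_w = P^{o_k}_{n_k,n_{k-1}} ∘ ··· ∘ P^{o_1}_{n_1,n_0}(π_{n_0}), and let A_{k,S_i} be a B_w maximizing tr(B_w) over sequences w of length k ending in S_i. Then tr(A_{k,S_i}) = max over previous states n_{k-1} of tr(P^{o_k}_{S_i, n_{k-1}}(A_{k-1, n_{k-1}})) — i.e. the dynamic-programming (Viterbi) recursion is valid. -/

import Mathlib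

open Matrix
open scoped ComplexOrder

noncomputable section

def blockMap {n m k : Type*} [Fintype n] [Fintype m]
    (Φ : Matrix n n ℂ →ₗ[ℂ] Matrix m m ℂ)
    (M : Matrix (n × k) (n × k) ℂ) : Matrix (m × k) (m × k) ℂ :=
  Matrix.of fun p q => Φ (Matrix.of fun a b => M (a, p.2) (b, q.2)) p.1 q.1

/-- A linear map between matrix algebras is completely positive if all its
finite-dimensional ampliations preserve positive semidefiniteness. -/
def IsCP {n m : Type*} [Fintype n] [Fintype m]
    (Φ : Matrix n n ℂ →ₗ[ℂ] Matrix m m ℂ) : Prop :=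
  ∀ k : ℕ, ∀ M : Matrix (n × Fin k) (n × Fin k) ℂ, M.PosSemidef →
    (blockMap Φ M).PosSemidef

/-- A quantum state: positive semidefinite with trace one. -/
def IsState {n : Type*} [Fintype n] (ρ : Matrix n n ℂ) : Prop :=
  ρ.PosSemidef ∧ ρ.trace = 1

/-- A sub-normalised quantum state: positive semidefinite with trace at most one. -/
def IsSubState {n : Type*} [Fintype n] (ρ : Matrix n n ℂ) : Prop :=
  ρ.PosSemidef ∧ ρ.trace ≤ 1

/-- Linear maps on operators over a `d`-dimensional space. -/
abbrev Op (d : ℕ) := Matrix (Fin d) (Fin d) ℂ →ₗ[ℂ] Matrix (Fin d) (Fin d) ℂ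

def TraceMonotone {d : ℕ} (Φ : Op d) : Prop :=
  ∀ α β : Matrix (Fin d) (Fin d) ℂ, IsSubState α → IsSubState β →
    β.trace < α.trace → (Φ β).trace < (Φ α).trace

/-- The sub-normalised state associated with a state path `w = (n_0, …, n_k)`:
`B_w = P^{o_k}_{n_k n_{k-1}} ∘ ⋯ ∘ P^{o_1}_{n_1 n_0}(π_{n_0})`. -/
def Bpath {V : Type*} {N d : ℕ} (P : V → Fin N → Fin N → Op d)
    (o : ℕ → V) (π : Fin N → Matrix (Fin d) (Fin d) ℂ) :
    ℕ → (ℕ → Fin N) → Matrix (Fin d) (Fin d) ℂ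
  | 0, w => π (w 0)
  | k + 1, w => P (o (k + 1)) (w (k + 1)) (w k) (Bpath P o π k w)


lemma psd_trace_nonneg {n : Type*} [Fintype n] {M : Matrix n n ℂ}
    (h : M.PosSemidef) : 0 ≤ M.trace := by
  exact h.trace_nonneg

lemma psd_trace_eq_zero {n : Type*} [Fintype n] {M : Matrix n n ℂ}
    (h : M.PosSemidef) (h0 : M.trace = 0) : M = 0 := by
  exact h.trace_eq_zero_iff.mp h0

lemma IsCP.posSemidef' {n m : Type*} [Fintype n] [Fintype m]
    {Φ : Matrix n n ℂ →ₗ[ℂ] Matrix m m ℂ} (hΦ : IsCP Φ)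
    {ρ : Matrix n n ℂ} (hρ : ρ.PosSemidef) : (Φ ρ).PosSemidef := by
  have hM : (ρ.submatrix (Prod.fst : n × Fin 1 → n) Prod.fst).PosSemidef :=
    hρ.submatrix _
  have h := (hΦ 1 _ hM).submatrix (fun a : m => ((a, 0) : m × Fin 1))
  have heq : Φ ρ = (blockMap Φ (ρ.submatrix Prod.fst Prod.fst)).submatrix
      (fun a : m => ((a, 0) : m × Fin 1)) (fun a => (a, 0)) := by
    ext a b; rfl
  rwa [heq]

lemma psd_smul' {n : Type*} [Fintype n] {M : Matrix n n ℂ} {t : ℝ}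
    (ht : 0 ≤ t) (h : M.PosSemidef) : ((t : ℂ) • M).PosSemidef := by
  constructor
  · have h1 := h.1
    unfold Matrix.IsHermitian at *
    rw [conjTranspose_smul, h1]
    simp
  · intro x
    exact (h.smul (show (0 : ℂ) ≤ (t : ℂ) by exact_mod_cast ht)).2 x

lemma traceMono_re {d : ℕ} {Φ : Op d} (hcp : IsCP Φ) (htm : TraceMonotone Φ)
    {α β : Matrix (Fin d) (Fin d) ℂ} (hα : IsSubState α) (hβ : IsSubState β)
    (h : β.trace.re ≤ α.trace.re) : (Φ β).trace.re ≤ (Φ α).trace.re := by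
  obtain ⟨hαre, hαim⟩ := Complex.le_def.mp (psd_trace_nonneg hα.1)
  obtain ⟨hβre, hβim⟩ := Complex.le_def.mp (psd_trace_nonneg hβ.1)
  simp only [Complex.zero_re, Complex.zero_im] at hαre hαim hβre hβim
  rcases lt_or_eq_of_le h with hlt | heq
  · have hcl : β.trace < α.trace := by
      rw [Complex.lt_def]; exact ⟨hlt, by rw [← hβim, ← hαim]⟩
    exact le_of_lt (Complex.lt_def.mp (htm α β hα hβ hcl)).1
  · by_cases h0 : α.trace = 0
    · have hβ0 : β.trace = 0 := by
        have : β.trace = α.trace := Complex.ext heq (by rw [← hβim, ← hαim])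
        rw [this, h0]
      rw [psd_trace_eq_zero hβ.1 hβ0, psd_trace_eq_zero hα.1 h0]
    · have hpos : 0 < α.trace.re := by
        rcases lt_or_eq_of_le hαre with hp | hp
        · exact hp
        · exact absurd (Complex.ext (by simpa using hp.symm) (by simpa using hαim.symm)) h0
      have hβ1 : β.trace.re ≤ 1 := by
        have := (Complex.le_def.mp hβ.2).1
        simpa using this
      set a := (Φ β).trace.re with ha
      set b := (Φ α).trace.re with hb
      have hann : 0 ≤ a := by
        have := (Complex.le_def.mp (psd_trace_nonneg (hcp.posSemidef' hβ.1))).1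
        simpa using this
      have hbnn : 0 ≤ b := by
        have := (Complex.le_def.mp (psd_trace_nonneg (hcp.posSemidef' hα.1))).1
        simpa using this
      have key : ∀ t : ℝ, 0 < t → t < 1 → t * a < b := by
        intro t ht0 ht1
        have hsub : IsSubState ((t : ℂ) • β) := by
          refine ⟨psd_smul' ht0.le hβ.1, ?_⟩
          rw [Matrix.trace_smul, Complex.le_def]
          constructor
          · rw [smul_eq_mul, Complex.re_ofReal_mul, Complex.one_re]
            nlinarith
          · simp [smul_eq_mul, Complex.mul_im, ← hβim]
        have hlt : ((t : ℂ) • β).trace < α.trace := by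
          rw [Matrix.trace_smul, Complex.lt_def]
          constructor
          · rw [smul_eq_mul, Complex.re_ofReal_mul]
            nlinarith [heq]
          · simp [smul_eq_mul, Complex.mul_im, ← hβim, ← hαim]
        have hres := htm α _ hα hsub hlt
        rw [_root_.map_smul, Matrix.trace_smul] at hres
        have := (Complex.lt_def.mp hres).1
        simpa [smul_eq_mul, Complex.re_ofReal_mul, ha, hb] using this
      by_contra hc
      push_neg at hc
      have h1 : 0 < a := lt_of_le_of_lt hbnn hc
      have h2 := key ((a + b) / (2 * a)) (by positivity)
        (by rw [div_lt_one (by positivity)]; linarith)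
      rw [div_mul_eq_mul_div, div_lt_iff₀ (by positivity)] at h2
      nlinarith


lemma Bpath_congr {V : Type*} {N d : ℕ} (P : V → Fin N → Fin N → Op d)
    (o : ℕ → V) (π : Fin N → Matrix (Fin d) (Fin d) ℂ) :
    ∀ (k : ℕ) (w w' : ℕ → Fin N), (∀ t ≤ k, w t = w' t) →
    Bpath P o π k w = Bpath P o π k w' := by
  intro k
  induction k with
  | zero => intro w w' h; simp only [Bpath, h 0 le_rfl]
  | succ n ih =>
    intro w w' h
    simp only [Bpath]
    rw [h (n + 1) le_rfl, h n (Nat.le_succ n),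
      ih w w' fun t ht => h t (ht.trans (Nat.le_succ n))]

lemma Bpath_subState {V : Type*} {N d : ℕ} {P : V → Fin N → Fin N → Op d}
    (hCP : ∀ v i j, IsCP (P v i j))
    (hTNI : ∀ v i j ρ, IsSubState ρ → (P v i j ρ).trace ≤ ρ.trace)
    {π : Fin N → Matrix (Fin d) (Fin d) ℂ} (hπ : ∀ i, IsSubState (π i))
    (o : ℕ → V) : ∀ (k : ℕ) (w : ℕ → Fin N), IsSubState (Bpath P o π k w) := by
  intro k
  induction k with
  | zero => intro w; exact hπ (w 0)
  | succ n ih =>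
    intro w
    exact ⟨(hCP _ _ _).posSemidef' (ih w).1,
      le_trans (hTNI _ _ _ _ (ih w)) (ih w).2⟩

/-- The Viterbi dynamic-programming recursion is valid for a Mealy QHMM whose
sub-TOM entries are trace-monotonicity preserving quantum operations. -/
theorem viterbi_recursion {V : Type*} {N d : ℕ} [Nonempty (Fin N)]
    (P : V → Fin N → Fin N → Op d)
    (hCP : ∀ v i j, IsCP (P v i j))
    (hTNI : ∀ v i j ρ, IsSubState ρ → (P v i j ρ).trace ≤ ρ.trace)
    (hTM : ∀ v i j, TraceMonotone (P v i j))
    (π : Fin N → Matrix (Fin d) (Fin d) ℂ) (hπ : ∀ i, IsSubState (π i))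
    (o : ℕ → V)
    (A : ℕ → Fin N → Matrix (Fin d) (Fin d) ℂ)
    (hA : ∀ k i, (∃ w : ℕ → Fin N, w k = i ∧ A k i = Bpath P o π k w) ∧
      ∀ w : ℕ → Fin N, w k = i → (Bpath P o π k w).trace.re ≤ (A k i).trace.re)
    (k : ℕ) (hk : 1 ≤ k) (i : Fin N) :
    (A k i).trace.re =
      Finset.univ.sup' Finset.univ_nonempty
        (fun j => (P (o k) i j (A (k - 1) j)).trace.re) := by
  obtain ⟨m, rfl⟩ : ∃ m, k = m + 1 := ⟨k - 1, (Nat.succ_pred_eq_of_pos hk).symm⟩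
  have hm1 : m + 1 - 1 = m := rfl
  have hAsub : ∀ k i, IsSubState (A k i) := by
    intro k i
    obtain ⟨w, _, hw⟩ := (hA k i).1
    rw [hw]; exact Bpath_subState hCP hTNI hπ o k w
  rw [hm1]
  apply le_antisymm
  · obtain ⟨w, hwk, hAeq⟩ := (hA (m + 1) i).1
    rw [hAeq]
    have hunf : Bpath P o π (m + 1) w
        = P (o (m + 1)) i (w m) (Bpath P o π m w) := by
      simp only [Bpath, hwk]
    rw [hunf]
    calc (P (o (m + 1)) i (w m) (Bpath P o π m w)).trace.re
        ≤ (P (o (m + 1)) i (w m) (A m (w m))).trace.re :=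
          traceMono_re (hCP _ _ _) (hTM _ _ _) (hAsub m (w m))
            (Bpath_subState hCP hTNI hπ o m w) ((hA m (w m)).2 w rfl)
      _ ≤ _ := Finset.le_sup' (fun j => (P (o (m + 1)) i j (A m j)).trace.re) (Finset.mem_univ (w m))
  · apply Finset.sup'_le
    intro j _
    obtain ⟨w, hwm, hAeq⟩ := (hA m j).1
    set w' : ℕ → Fin N := fun t => if t = m + 1 then i else w t with hw'
    have h1 : Bpath P o π m w' = Bpath P o π m w :=
      Bpath_congr P o π m w' w fun t ht => by
        simp only [hw']; rw [if_neg (by omega)]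
    have h3 : Bpath P o π (m + 1) w' = P (o (m + 1)) i j (A m j) := by
      show P (o (m + 1)) (w' (m + 1)) (w' m) (Bpath P o π m w') = _
      rw [h1, ← hAeq]
      have e1 : w' (m + 1) = i := by simp [hw']
      have e2 : w' m = j := by simp only [hw']; rw [if_neg (by omega)]; exact hwm
      rw [e1, e2]
    have h2 := (hA (m + 1) i).2 w' (by simp [hw'])
    rw [h3] at h2
    exact h2
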